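/- arXiv:2205.01009 — 3 statements merged into one kernel-verified Lean document; each statement's English description precedes it below -/
import Mathlib

section
/- Let G have girth at least 5, let L1 ⊆ V(G), L2 = N(L1) \ L1, and suppose u ∉ L1. If every vertex of L2 has a neighbor in L1, then u has at most |L1| neighbors in L1 ∪ L2. -/
open SimpleGraph

/-- `G` has girth at least 5: every cycle has length at least 5. -/
def GirthAtLeastFive {V : Type*} (G : SimpleGraph V) : Prop :=
  ∀ (v : V) (w : G.Walk v v), w.IsCycle → 5 ≤ w.length

lemma no_triangle' {V : Type*} {G : SimpleGraph V}
    (hg : GirthAtLeastFive G)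
    {a b c : V} (hab : G.Adj a b) (hbc : G.Adj b c) (hca : G.Adj c a) : False := by
  have n1 := hab.ne; have n2 := hbc.ne; have n3 := hca.ne
  have n1' := n1.symm; have n2' := n2.symm; have n3' := n3.symm
  have h := hg a (Walk.cons hab (Walk.cons hbc (Walk.cons hca Walk.nil))) ?_
  · simp [Walk.length_cons] at h
  · constructor
    · constructor
      · simp [Walk.isTrail_def, Walk.edges]; tauto
      · simp
    · simp [Walk.support]; tauto

lemma no_square' {V : Type*} {G : SimpleGraph V}
    (hg : GirthAtLeastFive G)
    {a b c d : V} (hab : G.Adj a b) (hbc : G.Adj b c) (hcd : G.Adj c d)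
    (hda : G.Adj d a) (hac : a ≠ c) (hbd : b ≠ d) : False := by
  have n1 := hab.ne; have n2 := hbc.ne; have n3 := hcd.ne; have n4 := hda.ne
  have n1' := n1.symm; have n2' := n2.symm; have n3' := n3.symm; have n4' := n4.symm
  have hac' := hac.symm; have hbd' := hbd.symm
  have h := hg a (Walk.cons hab (Walk.cons hbc (Walk.cons hcd (Walk.cons hda Walk.nil)))) ?_
  · simp [Walk.length_cons] at h
  · constructor
    · constructor
      · simp [Walk.isTrail_def, Walk.edges, Sym2.eq_iff]; tauto
      · simp
    · simp [Walk.support]; tauto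

/-- If `G` has girth at least 5, `L₂` is the (open) neighborhood of the set
`L₁`, and `u ∉ L₁`, then `u` has at most `|L₁|` neighbors in `L₁ ∪ L₂`. -/
theorem neighbors_in_L1_union_L2_le {V : Type*} [Fintype V] [DecidableEq V]
    (G : SimpleGraph V) [DecidableRel G.Adj]
    (hg : GirthAtLeastFive G) (L₁ L₂ : Finset V)
    (hL₂ : L₂ = Finset.univ.filter (fun v => v ∉ L₁ ∧ ∃ w ∈ L₁, G.Adj v w))
    (u : V) (hu : u ∉ L₁) :
    (G.neighborFinset u ∩ (L₁ ∪ L₂)).card ≤ L₁.card := by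
  classical
  set f : V → V := fun x =>
    if x ∈ L₁ then x else
      if h : ∃ w ∈ L₁, G.Adj x w then h.choose else x with hf
  have hmem : ∀ x ∈ G.neighborFinset u ∩ (L₁ ∪ L₂), f x ∈ L₁ := by
    intro x hx
    simp only [Finset.mem_inter, Finset.mem_union, hL₂, Finset.mem_filter,
      Finset.mem_univ, true_and, SimpleGraph.mem_neighborFinset] at hx
    obtain ⟨hadj, hx1 | ⟨hx1, hex⟩⟩ := hx
    · simp [hf, hx1]
    · simp only [hf, hx1, if_false, dif_pos hex]
      exact hex.choose_spec.1
  have hadjf : ∀ x, x ∉ L₁ → (∃ w ∈ L₁, G.Adj x w) → G.Adj x (f x) ∧ f x ∈ L₁ := by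
    intro x hx1 hex
    simp only [hf, hx1, if_false, dif_pos hex]
    exact ⟨hex.choose_spec.2, hex.choose_spec.1⟩
  apply Finset.card_le_card_of_injOn f hmem
  intro x hx y hy hfxy
  simp only [Finset.mem_coe, Finset.mem_inter, Finset.mem_union, hL₂, Finset.mem_filter,
    Finset.mem_univ, true_and, SimpleGraph.mem_neighborFinset] at hx hy
  obtain ⟨hux, hx'⟩ := hx
  obtain ⟨huy, hy'⟩ := hy
  by_contra hne
  rcases hx' with hx1 | ⟨hx1, hxe⟩ <;> rcases hy' with hy1 | ⟨hy1, hye⟩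
  · simp [hf, hx1, hy1] at hfxy; exact hne hfxy
  · obtain ⟨hyadj, _⟩ := hadjf y hy1 hye
    have : f y = x := by rw [← hfxy]; simp [hf, hx1]
    rw [this] at hyadj
    exact no_triangle' hg hux (G.adj_symm hyadj) (G.adj_symm huy)
  · obtain ⟨hxadj, _⟩ := hadjf x hx1 hxe
    have : f x = y := by rw [hfxy]; simp [hf, hy1]
    rw [this] at hxadj
    exact no_triangle' hg huy (G.adj_symm hxadj) (G.adj_symm hux)
  · obtain ⟨hxadj, hxw⟩ := hadjf x hx1 hxe
    obtain ⟨hyadj, _⟩ := hadjf y hy1 hye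
    rw [hfxy] at hxadj
    have huw : u ≠ f y := fun h => hu (h ▸ (hfxy ▸ hxw))
    exact no_square' hg hux hxadj (G.adj_symm hyadj) (G.adj_symm huy) huw hne
end

section
/- Twin vertex deletion preserves Token Sliding reachability: if u, v ∉ I_s ∪ I_t are vertices of G with N(u) = N(v), then there is a token-sliding reconfiguration sequence from I_s to I_t in G if and only if there is one in G − v. -/
/-- `I` is an independent set of size `k` (a token configuration). -/
def IndepConfig {V : Type*} (G : SimpleGraph V) (k : ℕ) (I : Finset V) : Prop :=
  I.card = k ∧ ∀ a ∈ I, ∀ b ∈ I, ¬ G.Adj a b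

/-- A single token slide: a token slides from `x` to an adjacent vertex `y`,
transforming the independent set `I` of size `k` into the independent set `J`. -/
def TSStep {V : Type*} [DecidableEq V] (G : SimpleGraph V) (k : ℕ)
    (I J : Finset V) : Prop :=
  IndepConfig G k I ∧ IndepConfig G k J ∧
    ∃ x y, G.Adj x y ∧ x ∈ I ∧ y ∉ I ∧ J = insert y (I.erase x)

/-- Token sliding reachability: a finite sequence of token slides. -/
def TSReach {V : Type*} [DecidableEq V] (G : SimpleGraph V) (k : ℕ)
    (I J : Finset V) : Prop :=
  Relation.ReflTransGen (TSStep G k) I J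

section Aux
variable {V : Type*} [DecidableEq V]

/-- Replace a token on `v` (if any) by a token on `u`, landing in the vertex set of `G - v`. -/
def pushCfg (u v : V) (I : Finset V) : Finset {x : V // x ≠ v} :=
  (if v ∈ I then insert u I else I).subtype (· ≠ v)

lemma mem_pushCfg {u v : V} {I : Finset V} {a : {x : V // x ≠ v}} :
    a ∈ pushCfg u v I ↔ (↑a ∈ I ∨ (v ∈ I ∧ ↑a = u)) := by
  unfold pushCfg
  split_ifs with h <;> simp [Finset.mem_subtype, h] <;> tauto

lemma pushCfg_of_not_mem {u v : V} {I : Finset V} (hv : v ∉ I) :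
    pushCfg u v I = I.subtype (· ≠ v) := by
  unfold pushCfg; rw [if_neg hv]

lemma card_pushCfg {u v : V} (huv : u ≠ v) {I : Finset V} (h : ¬(u ∈ I ∧ v ∈ I)) :
    (pushCfg u v I).card = I.card := by
  unfold pushCfg
  split_ifs with hvI
  · have hu : u ∉ I := fun hu => h ⟨hu, hvI⟩
    have hpos : 0 < I.card := Finset.card_pos.mpr ⟨v, hvI⟩
    rw [Finset.card_subtype, Finset.filter_ne', Finset.erase_insert_of_ne (Ne.symm (fun e => huv e.symm))]
    rw [Finset.card_insert_of_notMem (fun hc => hu (Finset.mem_of_mem_erase hc)),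
      Finset.card_erase_of_mem hvI]
    omega
  · rw [Finset.card_subtype, Finset.filter_ne', Finset.erase_eq_of_notMem hvI]

lemma indep_pushCfg {G : SimpleGraph V} {k : ℕ} {u v : V} (huv : u ≠ v)
    (htwin : ∀ w, G.Adj u w ↔ G.Adj v w) {I : Finset V}
    (hI : IndepConfig G k I) (h : ¬(u ∈ I ∧ v ∈ I)) :
    IndepConfig (G.comap (Subtype.val : {x : V // x ≠ v} → V)) k (pushCfg u v I) := by
  refine ⟨by rw [card_pushCfg huv h, hI.1], ?_⟩
  rintro a ha b hb hadj
  rw [mem_pushCfg] at ha hb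
  have hadj' : G.Adj ↑a ↑b := hadj
  obtain haI | ⟨hvIa, hau⟩ := ha <;> obtain hbI | ⟨hvIb, hbu⟩ := hb
  · exact hI.2 _ haI _ hbI hadj'
  · rw [hbu] at hadj'
    exact hI.2 _ haI _ hvIb ((htwin _).mp hadj'.symm).symm
  · rw [hau] at hadj'
    exact hI.2 _ hvIa _ hbI ((htwin _).mp hadj')
  · rw [hau, hbu] at hadj'
    exact G.irrefl hadj'

lemma push_step {G : SimpleGraph V} {k : ℕ} {u v : V} (huv : u ≠ v)
    (htwin : ∀ w, G.Adj u w ↔ G.Adj v w) {I J : Finset V}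
    (h : TSStep G k I J) (hinv : ¬(u ∈ I ∧ v ∈ I)) :
    ¬(u ∈ J ∧ v ∈ J) ∧
      TSStep (G.comap (Subtype.val : {x : V // x ≠ v} → V)) k (pushCfg u v I) (pushCfg u v J) := by
  obtain ⟨hI, hJ, x, y, hxy, hxI, hyI, hJeq⟩ := h
  by_cases hxv : x = v
  · -- token slides off v
    rw [hxv] at hxy hxI hJeq
    have hvI : v ∈ I := hxI
    have huI : u ∉ I := fun h' => hinv ⟨h', hvI⟩
    have hyv : y ≠ v := fun e => hyI (e ▸ hvI)
    have huy : G.Adj u y := (htwin y).mpr hxy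
    have hyu : y ≠ u := fun e => G.irrefl (e ▸ huy)
    have hvJ : v ∉ J := by
      rw [hJeq]; simp [Ne.symm hyv]
    have hinvJ : ¬(u ∈ J ∧ v ∈ J) := fun h' => hvJ h'.2
    refine ⟨hinvJ, indep_pushCfg huv htwin hI hinv, indep_pushCfg huv htwin hJ hinvJ,
      ⟨u, huv⟩, ⟨y, hyv⟩, huy, ?_, ?_, ?_⟩
    · rw [mem_pushCfg]; exact Or.inr ⟨hvI, rfl⟩
    · rw [mem_pushCfg]; rintro (h' | ⟨-, h'⟩)
      · exact hyI h'
      · exact hyu h'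
    · ext a
      have hav : (a : V) ≠ v := a.2
      have h1 : (a : V) ∈ I → (a : V) ≠ u := fun hm he => huI (he ▸ hm)
      simp [Finset.mem_insert, Finset.mem_erase, mem_pushCfg, hJeq, Subtype.ext_iff, hvI]
      tauto
  · by_cases hyv : y = v
    · -- token slides onto v
      rw [hyv] at hxy hyI hJeq
      have hvI : v ∉ I := hyI
      have hxu : G.Adj x u := ((htwin x).mpr hxy.symm).symm
      have huI : u ∉ I := fun h' => hI.2 _ hxI _ h' hxu
      have hvJ : v ∈ J := by rw [hJeq]; exact Finset.mem_insert_self _ _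
      have huJ : u ∉ J := by
        rw [hJeq]
        simp only [Finset.mem_insert, Finset.mem_erase]
        rintro (e | ⟨-, h'⟩)
        · exact huv e
        · exact huI h'
      have hinvJ : ¬(u ∈ J ∧ v ∈ J) := fun h' => huJ h'.1
      refine ⟨hinvJ, indep_pushCfg huv htwin hI hinv, indep_pushCfg huv htwin hJ hinvJ,
        ⟨x, hxv⟩, ⟨u, huv⟩, hxu, ?_, ?_, ?_⟩
      · rw [mem_pushCfg]; exact Or.inl hxI
      · rw [mem_pushCfg]; rintro (h' | ⟨h', -⟩)
        · exact huI h'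
        · exact hvI h'
      · ext a
        have hav : (a : V) ≠ v := a.2
        simp [Finset.mem_insert, Finset.mem_erase, mem_pushCfg, hJeq, Subtype.ext_iff, hvI, hav]
        tauto
    · -- token slides between two vertices distinct from v
      by_cases hvI : v ∈ I
      · have huI : u ∉ I := fun h' => hinv ⟨h', hvI⟩
        have hyu : y ≠ u := by
          intro e
          exact hI.2 _ hxI _ hvI ((htwin x).mp (e ▸ hxy.symm)).symm
        have hxu : x ≠ u := fun e => huI (e ▸ hxI)
        have hvJ : v ∈ J := by
          rw [hJeq]
          exact Finset.mem_insert_of_mem (Finset.mem_erase_of_ne_of_mem (Ne.symm hxv) hvI)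
        have huJ : u ∉ J := by
          rw [hJeq]
          simp only [Finset.mem_insert, Finset.mem_erase]
          rintro (e | ⟨-, h'⟩)
          · exact hyu e.symm
          · exact huI h'
        have hinvJ : ¬(u ∈ J ∧ v ∈ J) := fun h' => huJ h'.1
        refine ⟨hinvJ, indep_pushCfg huv htwin hI hinv, indep_pushCfg huv htwin hJ hinvJ,
          ⟨x, hxv⟩, ⟨y, hyv⟩, hxy, ?_, ?_, ?_⟩
        · rw [mem_pushCfg]; exact Or.inl hxI
        · rw [mem_pushCfg]; rintro (h' | ⟨-, h'⟩)
          · exact hyI h'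
          · exact hyu h'
        · ext a
          have hav : (a : V) ≠ v := a.2
          have h1 : (a : V) = u → (a : V) ≠ x := fun e => e ▸ (Ne.symm hxu)
          have h2 : (a : V) ∈ I → (a : V) ≠ u := fun hm he => huI (he ▸ hm)
          simp [Finset.mem_insert, Finset.mem_erase, mem_pushCfg, hJeq, Subtype.ext_iff, hvI]
          tauto
      · have hvJ : v ∉ J := by
          rw [hJeq]
          simp only [Finset.mem_insert, Finset.mem_erase]
          rintro (e | ⟨-, h'⟩)
          · exact hyv e.symm
          · exact hvI h'
        have hinvJ : ¬(u ∈ J ∧ v ∈ J) := fun h' => hvJ h'.2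
        refine ⟨hinvJ, indep_pushCfg huv htwin hI hinv, indep_pushCfg huv htwin hJ hinvJ,
          ⟨x, hxv⟩, ⟨y, hyv⟩, hxy, ?_, ?_, ?_⟩
        · rw [mem_pushCfg]; exact Or.inl hxI
        · rw [mem_pushCfg]; rintro (h' | ⟨h', -⟩)
          · exact hyI h'
          · exact hvI h'
        · ext a
          have hav : (a : V) ≠ v := a.2
          simp [Finset.mem_insert, Finset.mem_erase, mem_pushCfg, hJeq, Subtype.ext_iff,
            hvI, hvJ]
          exact fun e _ => absurd e.symm hyv

lemma step_up {G : SimpleGraph V} {k : ℕ} {v : V} {I J : Finset {x : V // x ≠ v}}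
    (h : TSStep (G.comap (Subtype.val : {x : V // x ≠ v} → V)) k I J) :
    TSStep G k (I.map (Function.Embedding.subtype _)) (J.map (Function.Embedding.subtype _)) := by
  obtain ⟨⟨hc1, hi1⟩, ⟨hc2, hi2⟩, x, y, hxy, hxI, hyI, hJeq⟩ := h
  refine ⟨⟨by simpa using hc1, ?_⟩, ⟨by simpa using hc2, ?_⟩, ↑x, ↑y, hxy, ?_, ?_, ?_⟩
  · rintro a ha b hb
    simp only [Finset.mem_map, Function.Embedding.coe_subtype] at ha hb
    obtain ⟨a', ha', rfl⟩ := ha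
    obtain ⟨b', hb', rfl⟩ := hb
    exact hi1 _ ha' _ hb'
  · rintro a ha b hb
    simp only [Finset.mem_map, Function.Embedding.coe_subtype] at ha hb
    obtain ⟨a', ha', rfl⟩ := ha
    obtain ⟨b', hb', rfl⟩ := hb
    exact hi2 _ ha' _ hb'
  · exact Finset.mem_map_of_mem _ hxI
  · simp only [Finset.mem_map, Function.Embedding.coe_subtype]
    rintro ⟨a', ha', e⟩
    exact hyI ((Subtype.ext e) ▸ ha')
  · rw [hJeq, Finset.map_insert, Finset.map_erase]
    rfl

end Aux

/-- Deleting a twin vertex preserves Token Sliding reachability: if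
`u, v ∉ Iₛ ∪ Iₜ` have the same open neighborhood, then `Iₛ` reaches `Iₜ` in `G`
iff it does in `G - v`. -/
theorem twin_deletion_preserves_reachability {V : Type*} [DecidableEq V]
    (G : SimpleGraph V) (k : ℕ) (hk : 1 ≤ k) (Is It : Finset V)
    (hIs : IndepConfig G k Is) (hIt : IndepConfig G k It)
    (u v : V) (huv : u ≠ v)
    (hu : u ∉ Is ∪ It) (hv : v ∉ Is ∪ It)
    (htwin : G.neighborSet u = G.neighborSet v) :
    TSReach G k Is It ↔
      TSReach ((G.comap (Subtype.val : {x : V // x ≠ v} → V))) k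
        (Is.subtype (· ≠ v)) (It.subtype (· ≠ v)) := by
  simp only [Finset.mem_union, not_or] at hu hv
  have htwin' : ∀ w, G.Adj u w ↔ G.Adj v w := fun w => by
    have := Set.ext_iff.mp htwin w
    simpa [SimpleGraph.mem_neighborSet] using this
  constructor
  · intro hreach
    have key : ∀ J : Finset V, TSReach G k Is J →
        ¬(u ∈ J ∧ v ∈ J) ∧
          TSReach (G.comap (Subtype.val : {x : V // x ≠ v} → V)) k
            (pushCfg u v Is) (pushCfg u v J) := by
      intro J hJ
      induction hJ with
      | refl => exact ⟨fun h' => hv.1 h'.2, Relation.ReflTransGen.refl⟩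
      | tail _ hstep ih =>
        obtain ⟨h1, h2⟩ := push_step huv htwin' hstep ih.1
        exact ⟨h1, ih.2.tail h2⟩
    have := (key It hreach).2
    rwa [pushCfg_of_not_mem hv.1, pushCfg_of_not_mem hv.2] at this
  · intro hreach
    have hmap := Relation.ReflTransGen.lift
      (fun s : Finset {x : V // x ≠ v} => s.map (Function.Embedding.subtype _))
      (fun a b hab => step_up hab) _ _ hreach
    simp only [Function.onFun, Finset.subtype_map, Finset.filter_ne'] at hmap
    rwa [Finset.erase_eq_of_notMem hv.1, Finset.erase_eq_of_notMem hv.2] at hmap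
end

section
/- Let G have girth at least 5 and let u be a vertex whose degree exceeds the number of tokens k, where I is an independent set with u ∈ I and |I| = k. Then there exists a neighbor w of u such that (I \ {u}) ∪ {w} is an independent set (i.e., the token on u can slide to w). -/
lemma no4cycle {V : Type*} {G : SimpleGraph V} (hg : GirthAtLeastFive G)
    {u v w1 w2 : V} (huv : v ≠ u) (hw : w1 ≠ w2)
    (h1 : G.Adj u w1) (h2 : G.Adj w1 v) (h3 : G.Adj v w2) (h4 : G.Adj w2 u) :
    False := by
  let c : G.Walk u u := .cons h1 (.cons h2 (.cons h3 (.cons h4 .nil)))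
  have hc : c.IsCycle := by
    simp [SimpleGraph.Walk.isCycle_def, SimpleGraph.Walk.isTrail_def, c,
      List.Nodup, Sym2.eq_iff]
    have n1 := h1.ne; have n2 := h2.ne; have n3 := h3.ne; have n4 := h4.ne; tauto
  have := hg u c hc
  simp [c] at this

/-- In a graph of girth at least 5, a token on a vertex `u` of degree greater
than the number of tokens `k` can always slide to some neighbor. -/
theorem high_degree_token_can_slide {V : Type*} [Fintype V] [DecidableEq V]
    (G : SimpleGraph V) [DecidableRel G.Adj]
    (hg : GirthAtLeastFive G) (k : ℕ) (I : Finset V)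
    (hcard : I.card = k) (hind : ∀ a ∈ I, ∀ b ∈ I, ¬ G.Adj a b)
    (u : V) (hu : u ∈ I) (hdeg : k < G.degree u) :
    ∃ w, G.Adj u w ∧
      ∀ a ∈ insert w (I.erase u), ∀ b ∈ insert w (I.erase u), ¬ G.Adj a b := by
  classical
  set S := I.erase u with hS
  set B := (G.neighborFinset u).filter (fun w => ∃ v ∈ S, G.Adj w v) with hB
  -- each blocked neighbor maps injectively into S
  have hBcard : B.card ≤ S.card := by
    have hmap : ∀ w ∈ B, ∃ v ∈ S, G.Adj w v := by
      intro w hw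
      exact (Finset.mem_filter.mp hw).2
    choose f hf1 hf2 using hmap
    apply Finset.card_le_card_of_injOn (fun w => if h : w ∈ B then f w h else u)
    · intro w hw
      simp only [dif_pos (Finset.mem_coe.mp hw)]
      exact hf1 w hw
    · intro w1 h1 w2 h2 heq
      rw [Finset.mem_coe] at h1 h2
      simp only [dif_pos h1, dif_pos h2] at heq
      by_contra hne
      have a1 : G.Adj u w1 := (SimpleGraph.mem_neighborFinset ..).mp (Finset.mem_filter.mp h1).1
      have a2 : G.Adj u w2 := (SimpleGraph.mem_neighborFinset ..).mp (Finset.mem_filter.mp h2).1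
      have hv2 : G.Adj (f w1 h1) w2 := by rw [heq]; exact (hf2 w2 h2).symm
      exact no4cycle hg (Finset.ne_of_mem_erase (hf1 w1 h1)) hne a1 (hf2 w1 h1) hv2 a2.symm
  have hScard : S.card = k - 1 := by
    rw [hS, Finset.card_erase_of_mem hu, hcard]
  have hk : 1 ≤ k := by
    rw [← hcard]; exact Finset.card_pos.mpr ⟨u, hu⟩
  have hlt : B.card < (G.neighborFinset u).card := by
    rw [SimpleGraph.card_neighborFinset_eq_degree]
    omega
  obtain ⟨w, hwN, hwB⟩ : ∃ w ∈ G.neighborFinset u, w ∉ B := by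
    by_contra h
    push_neg at h
    have : G.neighborFinset u ⊆ B := h
    exact absurd (Finset.card_le_card this) (by omega)
  have hadj : G.Adj u w := (SimpleGraph.mem_neighborFinset ..).mp hwN
  have hwfree : ∀ v ∈ S, ¬ G.Adj w v := by
    intro v hv hav
    exact hwB (Finset.mem_filter.mpr ⟨hwN, v, hv, hav⟩)
  refine ⟨w, hadj, ?_⟩
  intro a ha b hb hab
  rcases Finset.mem_insert.mp ha with rfl | haS <;>
  rcases Finset.mem_insert.mp hb with rfl | hbS
  · exact G.loopless.irrefl _ hab
  · exact hwfree b hbS hab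
  · exact hwfree a haS hab.symm
  · exact hind a (Finset.mem_of_mem_erase haS) b (Finset.mem_of_mem_erase hbS) hab
end
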